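/- Let F be a finite field with q = |F| elements and let K ≤ n ≤ N be natural numbers. Then the number of orbits of the action of GL(N,F) on the collection of n-element subsets S of F^N whose linear span has dimension exactly K is at most q^{K(n−K)}. -/

import Mathlib

open Matrix MulAction Pointwise

/-- The action of `GL(N,F)` on `F^N` by matrix-vector multiplication. -/
instance glVecAction {F : Type*} [Field F] {N : ℕ} :
    MulAction (GL (Fin N) F) (Fin N → F) where
  smul g v := (g : Matrix (Fin N) (Fin N) F).mulVec v
  one_smul v := by
    show ((1 : GL (Fin N) F) : Matrix (Fin N) (Fin N) F).mulVec v = v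
    simp
  mul_smul g h v := by
    show ((g * h : GL (Fin N) F) : Matrix (Fin N) (Fin N) F).mulVec v
      = (g : Matrix (Fin N) (Fin N) F).mulVec ((h : Matrix (Fin N) (Fin N) F).mulVec v)
    simp [Matrix.mulVec_mulVec]

/-- The number of orbits of a `G`-action meeting a set `P` of states; for a `G`-invariant
`P` this is the number of orbits of `G` on `P`. -/
noncomputable def numOrbitsOn (G : Type*) {X : Type*} [Group G] [MulAction G X]
    (P : Set X) : ℕ :=
  Nat.card (Quotient.mk (MulAction.orbitRel G X) '' P)

section Aux

variable {F : Type*} [Field F] {N : ℕ}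

lemma gl_smul_eq_lin (g : (Fin N → F) ≃ₗ[F] (Fin N → F)) (v : Fin N → F) :
    (Matrix.GeneralLinearGroup.toLin.symm
        ((LinearMap.GeneralLinearGroup.generalLinearEquiv F (Fin N → F)).symm g)) • v
      = g v := by
  set G := Matrix.GeneralLinearGroup.toLin.symm
      ((LinearMap.GeneralLinearGroup.generalLinearEquiv F (Fin N → F)).symm g)
  show ((G : GL (Fin N) F) : Matrix (Fin N) (Fin N) F).mulVec v = g v
  have h1 : ((Matrix.GeneralLinearGroup.toLin G :
      LinearMap.GeneralLinearGroup F (Fin N → F)) : (Fin N → F) →ₗ[F] (Fin N → F))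
      = Matrix.mulVecLin (G : Matrix (Fin N) (Fin N) F) :=
    Matrix.GeneralLinearGroup.coe_toLin G
  have h2 : Matrix.GeneralLinearGroup.toLin G
      = (LinearMap.GeneralLinearGroup.generalLinearEquiv F (Fin N → F)).symm g := by
    simp [G]
  rw [h2] at h1
  have h3 := congrArg (fun L => L v) h1
  exact h3.symm

lemma vanish_of_mem_span_std {K : ℕ} (hKN : K ≤ N) (w : Fin N → F)
    (hw : w ∈ Submodule.span F
      (Set.range fun j : Fin K => (Pi.single (Fin.castLE hKN j) 1 : Fin N → F)))
    (m : Fin N) (hm : K ≤ (m : ℕ)) : w m = 0 := by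
  induction hw using Submodule.span_induction with
  | mem x hx =>
      obtain ⟨j, rfl⟩ := hx
      apply Pi.single_eq_of_ne
      intro h
      have : ((Fin.castLE hKN j : Fin N) : ℕ) = (m : ℕ) := by rw [h]
      simp only [Fin.coe_castLE] at this
      omega
  | zero => rfl
  | add x y _ _ hx hy => simp [hx, hy]
  | smul a x _ hx => simp [hx]

end Aux

/-- The number of orbits of `GL(N,F)` on `n`-element subsets of `F^N` whose linear span
has dimension exactly `K` is at most `q^(K(n-K))`. -/
theorem gl_orbits_on_subsets_of_rank_le (F : Type*) [Field F] [Fintype F] [DecidableEq F]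
    (N n K : ℕ) (hK : K ≤ n) (hn : n ≤ N) :
    numOrbitsOn (GL (Fin N) F)
      {S : Finset (Fin N → F) | S.card = n ∧
        Module.finrank F (Submodule.span F (S : Set (Fin N → F))) = K}
      ≤ Fintype.card F ^ (K * (n - K)) := by
  classical
  have hKN : K ≤ N := hK.trans hn
  set X := Fin N → F with hX
  let eJ : Fin K → X := fun j => Pi.single (Fin.castLE hKN j) 1
  let vOf : (Fin K → F) → X := fun w m => if h : (m : ℕ) < K then w ⟨(m : ℕ), h⟩ else 0
  let T : (Fin (n - K) → Fin K → F) → Finset X := fun f =>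
    (Finset.univ.image eJ) ∪ (Finset.univ.image fun i => vOf (f i))
  let ψ : (Fin (n - K) → Fin K → F) →
      Quotient (MulAction.orbitRel (GL (Fin N) F) (Finset X)) :=
    fun f => Quotient.mk _ (T f)
  have key : (Quotient.mk (MulAction.orbitRel (GL (Fin N) F) (Finset X)) ''
      {S : Finset X | S.card = n ∧
        Module.finrank F (Submodule.span F (S : Set X)) = K}) ⊆ Set.range ψ := by
    rintro x ⟨S, ⟨hScard, hSrank⟩, rfl⟩
    -- find a basis of the span inside S
    obtain ⟨b, hbS, hbspan, hbind⟩ := exists_linearIndependent F (S : Set X)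
    have hbfin : b.Finite := S.finite_toSet.subset hbS
    letI : Fintype b := hbfin.fintype
    have hcardb : b.toFinset.card = K := by
      rw [← finrank_span_set_eq_card hbind, hbspan, hSrank]
    set t : Finset X := b.toFinset with ht
    have hct : (t : Set X) = b := Set.coe_toFinset b
    have htS : t ⊆ S := by
      intro x hx
      have : x ∈ b := Set.mem_toFinset.mp hx
      exact hbS this
    -- extend to a basis of F^N
    set B : Set X := LinearIndepOn.extend (K := F) (v := id) hbind (Set.subset_univ b) with hB
    have hbB : b ⊆ B := LinearIndepOn.subset_extend (K := F) (v := id) hbind _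
    let bas : Module.Basis B F X := Module.Basis.extend hbind
    letI : Fintype B := FiniteDimensional.fintypeBasisIndex bas
    have hcardB : Fintype.card B = N := by
      rw [← Module.finrank_eq_card_basis bas, Module.finrank_fin_fun]
    have hcardbK : Fintype.card b = K := by
      rw [← hcardb, Set.toFinset_card]
    have hsum : Fintype.card b + Fintype.card ↑(B \ b) = N := by
      have := Fintype.card_congr (Equiv.Set.sumDiffSubset hbB)
      rw [Fintype.card_sum] at this
      omega
    let e1 : b ≃ Fin K := Fintype.equivFinOfCardEq hcardbK
    let e2 : ↑(B \ b) ≃ Fin (N - K) := Fintype.equivFinOfCardEq (by omega)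
    let σ : B ≃ Fin N := (Equiv.Set.sumDiffSubset hbB).symm.trans
      ((e1.sumCongr e2).trans (finSumFinEquiv.trans (finCongr (by omega))))
    let B' : Module.Basis (Fin N) F X := bas.reindex σ
    let g : X ≃ₗ[F] X := B'.equiv (Pi.basisFun F (Fin N)) (Equiv.refl _)
    -- behavior of g on b
    have hgb : ∀ x (hx : x ∈ b), g x = eJ (e1 ⟨x, hx⟩) := by
      intro x hx
      have hxB : x ∈ B := hbB hx
      have h1 : B' (σ ⟨x, hxB⟩) = x := by
        rw [Module.Basis.reindex_apply, Equiv.symm_apply_apply]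
        exact Module.Basis.extend_apply_self hbind ⟨x, hxB⟩
      have h2 : g (B' (σ ⟨x, hxB⟩)) = Pi.single (σ ⟨x, hxB⟩) 1 := by
        rw [Module.Basis.equiv_apply, Equiv.refl_apply, Pi.basisFun_apply]
      have h3 : σ ⟨x, hxB⟩ = Fin.castLE hKN (e1 ⟨x, hx⟩) := by
        have hsd : (Equiv.Set.sumDiffSubset hbB).symm ⟨x, hxB⟩ = Sum.inl ⟨x, hx⟩ := by
          rw [Equiv.symm_apply_eq]
          exact (Equiv.Set.sumDiffSubset_apply_inl hbB ⟨x, hx⟩).symm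
        show ((Equiv.Set.sumDiffSubset hbB).symm.trans
          ((e1.sumCongr e2).trans (finSumFinEquiv.trans (finCongr (by omega : K + (N - K) = N)))))
            ⟨x, hxB⟩ = Fin.castLE hKN (e1 ⟨x, hx⟩)
        rw [Equiv.trans_apply, hsd]
        apply Fin.ext
        simp
      rw [h1, h3] at h2
      exact h2
    -- image of t under g
    have hET : Finset.image (fun x => g x) t = Finset.univ.image eJ := by
      ext y
      simp only [Finset.mem_image, Finset.mem_univ, true_and]
      constructor
      · rintro ⟨x, hx, rfl⟩
        have hxb : x ∈ b := Set.mem_toFinset.mp hx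
        exact ⟨e1 ⟨x, hxb⟩, (hgb x hxb).symm⟩
      · rintro ⟨j, rfl⟩
        refine ⟨(e1.symm j : X), Set.mem_toFinset.mpr (e1.symm j).2, ?_⟩
        rw [hgb _ (e1.symm j).2]
        congr 1
        simp
    -- vanishing of coordinates ≥ K for g of elements of span t
    have hvan : ∀ w ∈ Submodule.span F (t : Set X), ∀ m : Fin N, K ≤ (m : ℕ) → g w m = 0 := by
      intro w hw m hm
      have h1 : g w ∈ Submodule.span F ((g : X →ₗ[F] X) '' (t : Set X)) :=
        Submodule.apply_mem_span_image_of_mem_span _ hw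
      have h2 : ((g : X →ₗ[F] X)) '' (t : Set X) = Set.range eJ := by
        have h := congrArg (fun (s : Finset X) => (s : Set X)) hET
        simpa [Finset.coe_image, Set.image_univ] using h
      rw [h2] at h1
      exact vanish_of_mem_span_std hKN (g w) h1 m hm
    -- the leftover part
    set st : Finset X := S \ t with hst
    have hcardst : st.card = n - K := by
      rw [hst, Finset.card_sdiff_of_subset htS, hScard, hcardb]
    let c : Fin (n - K) ≃ st :=
      (Fintype.equivFinOfCardEq (by rw [Fintype.card_coe, hcardst])).symm
    let f : Fin (n - K) → Fin K → F := fun i j => g ((c i : X)) (Fin.castLE hKN j)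
    have hmemspan : ∀ x ∈ S, (x : X) ∈ Submodule.span F (t : Set X) := by
      intro x hx
      rw [hct, hbspan]
      exact Submodule.subset_span hx
    have hvOf : ∀ i, vOf (f i) = g (c i : X) := by
      intro i
      funext m
      show (if h : (m : ℕ) < K then f i ⟨(m : ℕ), h⟩ else 0) = g (c i : X) m
      by_cases h : (m : ℕ) < K
      · rw [dif_pos h]
        have heq : Fin.castLE hKN (⟨(m : ℕ), h⟩ : Fin K) = m := by apply Fin.ext; rfl
        rw [show f i ⟨(m : ℕ), h⟩ = g ((c i : X)) (Fin.castLE hKN ⟨(m : ℕ), h⟩) from rfl, heq]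
      · rw [dif_neg h]
        have hmem : (c i : X) ∈ S := Finset.mem_sdiff.mp (c i).2 |>.1
        exact (hvan _ (hmemspan _ hmem) m (not_lt.mp h)).symm
    have hVT : Finset.image (fun x => g x) st
        = Finset.univ.image (fun i => vOf (f i)) := by
      ext y
      simp only [Finset.mem_image, Finset.mem_univ, true_and]
      constructor
      · rintro ⟨x, hx, rfl⟩
        refine ⟨c.symm ⟨x, hx⟩, ?_⟩
        rw [hvOf]
        congr 1
        simp
      · rintro ⟨i, rfl⟩
        exact ⟨(c i : X), (c i).2, (hvOf i).symm⟩
    -- the group element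
    let G : GL (Fin N) F := Matrix.GeneralLinearGroup.toLin.symm
      ((LinearMap.GeneralLinearGroup.generalLinearEquiv F X).symm g)
    have hGg : ∀ v : X, G • v = g v := fun v => gl_smul_eq_lin g v
    have hGS : G • S = T f := by
      rw [Finset.smul_finset_def]
      have himg : Finset.image (fun x => G • x) S = Finset.image (fun x => g x) S :=
        Finset.image_congr (fun x _ => hGg x)
      rw [himg]
      have hsplit : S = t ∪ st := (Finset.union_sdiff_of_subset htS).symm
      rw [hsplit, Finset.image_union, hET, hVT]
    refine ⟨f, ?_⟩
    show Quotient.mk _ (T f) = Quotient.mk _ S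
    exact Quotient.sound (MulAction.orbitRel_apply.mpr ⟨G, hGS⟩)
  -- counting
  rw [numOrbitsOn]
  calc Nat.card (Quotient.mk (MulAction.orbitRel (GL (Fin N) F) (Finset X)) ''
      {S : Finset X | S.card = n ∧
        Module.finrank F (Submodule.span F (S : Set X)) = K})
      ≤ Nat.card (Set.range ψ) := by
        rw [Nat.card_coe_set_eq, Nat.card_coe_set_eq]
        exact Set.ncard_le_ncard key (Set.finite_range ψ)
    _ ≤ Nat.card (Fin (n - K) → Fin K → F) := Finite.card_range_le ψ
    _ = Fintype.card F ^ (K * (n - K)) := by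
        rw [Nat.card_eq_fintype_card]
        simp [Fintype.card_fun, ← pow_mul, mul_comm]
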